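/- Let k have characteristic zero, n ≥ 3, and let D, D' be the derivations on k[x_1,…,x_n] with D(x_j) = (n-j)·x_{j+1}, D'(x_j) = (j-1)·x_{j-1} (boundary terms zero). For any a ∈ k with a ≠ 0, exp((1-a)D) ∘ exp(-D') ∘ exp((1-a⁻¹)D) ∘ exp(aD') = μ_{a⁻¹}, where μ_b is the linear automorphism μ_b(x_i) = b^{n-2i+1}·x_i. -/

import Mathlib

open MvPolynomial

/-- `e` is the exponential `exp d` of the locally nilpotent map `d`:
its value on each `f` is the (eventually constant) sum `∑ᵢ d^[i] f / i!`. -/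
def IsExpOf (k : Type*) [Field k] {P : Type*} [AddCommMonoid P] [Module k P]
    (d : P → P) (e : P → P) : Prop :=
  ∀ f : P, ∃ N : ℕ, ∀ M : ℕ, N ≤ M →
    e f = ∑ i ∈ Finset.range M, ((Nat.factorial i : k)⁻¹) • d^[i] f

namespace ExpAuxNagata

set_option linter.unusedSectionVars false

variable {k : Type*} [Field k] [CharZero k] {n : ℕ}

lemma iterD (D : Derivation k (MvPolynomial (Fin n) k) (MvPolynomial (Fin n) k))
    (hD : ∀ j : Fin n, D (X j) =
      if h : (j : ℕ) + 1 < n then (n - ((j : ℕ) + 1)) • X (⟨(j : ℕ) + 1, h⟩ : Fin n) else 0)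
    (t : k) (j : Fin n) (i : ℕ) :
    (fun p => t • D p)^[i] (X j) =
      if h : (j : ℕ) + i < n then
        ((t ^ i * ((n - 1 - (j : ℕ)).descFactorial i : ℕ)) : k) • X (⟨(j : ℕ) + i, h⟩ : Fin n)
      else 0 := by
  induction i with
  | zero =>
      have h : (j : ℕ) + 0 < n := by omega
      rw [dif_pos h]
      simp [Fin.ext_iff]
  | succ i ih =>
      rw [Function.iterate_succ_apply', ih]
      by_cases h : (j : ℕ) + i < n
      · rw [dif_pos h]
        have hx := hD ⟨(j : ℕ) + i, h⟩
        simp only [Fin.val_mk] at hx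
        show t • D _ = _
        rw [Derivation.map_smul, hx]
        by_cases h2 : (j : ℕ) + i + 1 < n
        · rw [dif_pos h2, dif_pos (show (j:ℕ) + (i+1) < n by omega)]
          rw [smul_smul, ← Nat.cast_smul_eq_nsmul k, smul_smul]
          congr 1
          have e1 : (n - 1 - (j : ℕ)).descFactorial (i+1)
              = (n - 1 - (j:ℕ) - i) * (n - 1 - (j : ℕ)).descFactorial i := Nat.descFactorial_succ _ _
          have e2 : n - 1 - (j:ℕ) - i = n - ((j:ℕ) + i + 1) := by omega
          rw [e1, e2]
          push_cast [Nat.cast_sub (by omega : (j:ℕ) + i + 1 ≤ n)]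
          ring
        · rw [dif_neg h2, dif_neg (show ¬ ((j:ℕ) + (i+1) < n) by omega)]
          simp
      · rw [dif_neg h, dif_neg (by omega)]
        show t • D 0 = 0
        simp

lemma iterD' (D' : Derivation k (MvPolynomial (Fin n) k) (MvPolynomial (Fin n) k))
    (hD' : ∀ j : Fin n, D' (X j) =
      if h : 0 < (j : ℕ) then (j : ℕ) • X (⟨(j : ℕ) - 1, Nat.lt_of_le_of_lt (Nat.sub_le _ _) j.2⟩ : Fin n) else 0)
    (s : k) (j : Fin n) (i : ℕ) :
    (fun p => s • D' p)^[i] (X j) =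
      ((s ^ i * ((j : ℕ).descFactorial i : ℕ)) : k) •
        X (⟨(j : ℕ) - i, by omega⟩ : Fin n) := by
  induction i with
  | zero => simp [Fin.ext_iff]
  | succ i ih =>
      rw [Function.iterate_succ_apply', ih]
      show s • D' _ = _
      rw [Derivation.map_smul]
      have hx := hD' ⟨(j : ℕ) - i, by omega⟩
      simp only [Fin.val_mk] at hx
      rw [hx]
      by_cases h : 0 < (j : ℕ) - i
      · rw [dif_pos h]
        rw [← Nat.cast_smul_eq_nsmul k, smul_smul, smul_smul]
        congr 1
        rw [Nat.descFactorial_succ]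
        push_cast [Nat.cast_sub (by omega : i ≤ (j:ℕ))]
        ring
      · rw [dif_neg h]
        have : (j : ℕ).descFactorial (i+1) = 0 := by
          rw [Nat.descFactorial_succ]
          have : (j:ℕ) - i = 0 := by omega
          rw [this, zero_mul]
        rw [this]
        simp

lemma expD (D : Derivation k (MvPolynomial (Fin n) k) (MvPolynomial (Fin n) k))
    (hD : ∀ j : Fin n, D (X j) =
      if h : (j : ℕ) + 1 < n then (n - ((j : ℕ) + 1)) • X (⟨(j : ℕ) + 1, h⟩ : Fin n) else 0)
    (t : k) (e : MvPolynomial (Fin n) k → MvPolynomial (Fin n) k)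
    (he : IsExpOf k (fun p => t • D p) e) (j : Fin n) :
    e (X j) = ∑ i ∈ Finset.range n,
      if h : (j : ℕ) + i < n then
        (((n - 1 - (j : ℕ)).choose i : k) * t ^ i) • X (⟨(j : ℕ) + i, h⟩ : Fin n)
      else 0 := by
  obtain ⟨N, hN⟩ := he (X j)
  rw [hN (max N n) (le_max_left _ _)]
  rw [← Finset.sum_subset (Finset.range_subset_range.2 (le_max_right N n))]
  · refine Finset.sum_congr rfl (fun i _ => ?_)
    rw [iterD D hD t j i]
    split_ifs with h
    · rw [smul_smul]
      congr 1
      have hfac : (i.factorial : k) ≠ 0 := Nat.cast_ne_zero.2 (Nat.factorial_ne_zero i)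
      rw [Nat.descFactorial_eq_factorial_mul_choose]
      push_cast
      field_simp
    · simp
  · intro i _ hi
    rw [iterD D hD t j i, dif_neg (by simp at hi; omega)]
    simp

lemma expD' (D' : Derivation k (MvPolynomial (Fin n) k) (MvPolynomial (Fin n) k))
    (hD' : ∀ j : Fin n, D' (X j) =
      if h : 0 < (j : ℕ) then (j : ℕ) • X (⟨(j : ℕ) - 1, Nat.lt_of_le_of_lt (Nat.sub_le _ _) j.2⟩ : Fin n) else 0)
    (s : k) (e : MvPolynomial (Fin n) k → MvPolynomial (Fin n) k)
    (he : IsExpOf k (fun p => s • D' p) e) (j : Fin n) :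
    e (X j) = ∑ i ∈ Finset.range n,
      (((j : ℕ).choose i : k) * s ^ i) • X (⟨(j : ℕ) - i, by omega⟩ : Fin n) := by
  obtain ⟨N, hN⟩ := he (X j)
  rw [hN (max N n) (le_max_left _ _)]
  have step : ∀ i : ℕ, ((i.factorial : k))⁻¹ • (fun p => s • D' p)^[i] (X j)
      = (((j : ℕ).choose i : k) * s ^ i) • X (⟨(j : ℕ) - i, by omega⟩ : Fin n) := by
    intro i
    have h1 := iterD' D' hD' s j i
    rw [h1, smul_smul]
    congr 1
    have hfac : (i.factorial : k) ≠ 0 := Nat.cast_ne_zero.2 (Nat.factorial_ne_zero i)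
    rw [Nat.descFactorial_eq_factorial_mul_choose]
    push_cast
    field_simp
  rw [Finset.sum_congr rfl (fun i _ => step i)]
  refine (Finset.sum_subset (Finset.range_subset_range.2 (le_max_right N n)) ?_).symm
  intro i _ hi
  have : (j : ℕ).choose i = 0 := Nat.choose_eq_zero_of_lt (by simp at hi; omega)
  rw [this]
  simp

lemma phiD (D : Derivation k (MvPolynomial (Fin n) k) (MvPolynomial (Fin n) k))
    (hD : ∀ j : Fin n, D (X j) =
      if h : (j : ℕ) + 1 < n then (n - ((j : ℕ) + 1)) • X (⟨(j : ℕ) + 1, h⟩ : Fin n) else 0)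
    (t : k) (e : MvPolynomial (Fin n) k → MvPolynomial (Fin n) k)
    (he : IsExpOf k (fun p => t • D p) e) (j : Fin n) :
    aeval (fun m : Fin n => (X 0 : MvPolynomial (Fin 2) k) ^ (n - 1 - (m : ℕ)) * X 1 ^ (m : ℕ))
        (e (X j))
      = ((X 0 : MvPolynomial (Fin 2) k) + C t * X 1) ^ (n - 1 - (j : ℕ)) * X 1 ^ (j : ℕ) := by
  have hjn : (j : ℕ) < n := j.2
  set m := n - 1 - (j : ℕ) with hm
  rw [expD D hD t e he j, map_sum]
  have hsub : Finset.range (m + 1) ⊆ Finset.range n := Finset.range_subset_range.2 (by omega)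
  rw [← Finset.sum_subset hsub (by
    intro i _ hi
    rw [dif_neg (by simp at hi ⊢; omega)]
    simp)]
  rw [add_pow, Finset.sum_mul]
  conv_rhs => rw [← Finset.sum_range_reflect]
  refine Finset.sum_congr rfl (fun i hi => ?_)
  have him : i ≤ m := by simp at hi; omega
  rw [dif_pos (by omega : (j : ℕ) + i < n)]
  rw [map_smul, aeval_X]
  simp only [Fin.val_mk, Nat.add_sub_cancel]
  rw [Nat.sub_sub_self him, Nat.choose_symm him]
  have e1 : n - 1 - ((j : ℕ) + i) = m - i := by omega
  rw [e1, pow_add]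
  rw [smul_eq_C_mul, mul_pow, ← C_pow,
    ← map_natCast (C : k →+* MvPolynomial (Fin 2) k) (m.choose i), C_mul]
  ring

lemma phiD' (D' : Derivation k (MvPolynomial (Fin n) k) (MvPolynomial (Fin n) k))
    (hD' : ∀ j : Fin n, D' (X j) =
      if h : 0 < (j : ℕ) then (j : ℕ) • X (⟨(j : ℕ) - 1, Nat.lt_of_le_of_lt (Nat.sub_le _ _) j.2⟩ : Fin n) else 0)
    (s : k) (e : MvPolynomial (Fin n) k → MvPolynomial (Fin n) k)
    (he : IsExpOf k (fun p => s • D' p) e) (j : Fin n) :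
    aeval (fun m : Fin n => (X 0 : MvPolynomial (Fin 2) k) ^ (n - 1 - (m : ℕ)) * X 1 ^ (m : ℕ))
        (e (X j))
      = (X 0 : MvPolynomial (Fin 2) k) ^ (n - 1 - (j : ℕ))
          * (X 1 + C s * X 0) ^ (j : ℕ) := by
  have hjn : (j : ℕ) < n := j.2
  rw [expD' D' hD' s e he j, map_sum]
  have hsub : Finset.range ((j : ℕ) + 1) ⊆ Finset.range n := Finset.range_subset_range.2 (by omega)
  rw [← Finset.sum_subset hsub (by
    intro i _ hi
    have : (j : ℕ).choose i = 0 := Nat.choose_eq_zero_of_lt (by simp at hi; omega)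
    rw [this]
    simp)]
  rw [add_pow, Finset.mul_sum]
  conv_rhs => rw [← Finset.sum_range_reflect]
  refine Finset.sum_congr rfl (fun i hi => ?_)
  have him : i ≤ (j : ℕ) := by simp at hi; omega
  rw [map_smul, aeval_X]
  simp only [Fin.val_mk, Nat.add_sub_cancel]
  rw [Nat.sub_sub_self him, Nat.choose_symm him]
  have e1 : n - 1 - ((j : ℕ) - i) = (n - 1 - (j : ℕ)) + i := by omega
  rw [e1, pow_add]
  rw [smul_eq_C_mul, mul_pow, ← C_pow,
    ← map_natCast (C : k →+* MvPolynomial (Fin 2) k) ((j : ℕ).choose i), C_mul]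
  ring

lemma interD (D : Derivation k (MvPolynomial (Fin n) k) (MvPolynomial (Fin n) k))
    (hD : ∀ j : Fin n, D (X j) =
      if h : (j : ℕ) + 1 < n then (n - ((j : ℕ) + 1)) • X (⟨(j : ℕ) + 1, h⟩ : Fin n) else 0)
    (t : k) (ε : MvPolynomial (Fin n) k →ₐ[k] MvPolynomial (Fin n) k)
    (he : IsExpOf k (fun p => t • D p) ⇑ε) :
    (aeval (fun m : Fin n =>
        (X 0 : MvPolynomial (Fin 2) k) ^ (n - 1 - (m : ℕ)) * X 1 ^ (m : ℕ))).comp ε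
      = (aeval ![(X 0 : MvPolynomial (Fin 2) k) + C t * X 1, X 1]).comp
          (aeval (fun m : Fin n =>
            (X 0 : MvPolynomial (Fin 2) k) ^ (n - 1 - (m : ℕ)) * X 1 ^ (m : ℕ))) := by
  apply MvPolynomial.algHom_ext
  intro j
  simp only [AlgHom.comp_apply]
  rw [phiD D hD t ⇑ε he j, aeval_X]
  simp only [map_mul, map_pow, aeval_X, Matrix.cons_val_zero, Matrix.cons_val_one,
    Matrix.head_cons]

lemma interD' (D' : Derivation k (MvPolynomial (Fin n) k) (MvPolynomial (Fin n) k))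
    (hD' : ∀ j : Fin n, D' (X j) =
      if h : 0 < (j : ℕ) then (j : ℕ) • X (⟨(j : ℕ) - 1, Nat.lt_of_le_of_lt (Nat.sub_le _ _) j.2⟩ : Fin n) else 0)
    (s : k) (ε : MvPolynomial (Fin n) k →ₐ[k] MvPolynomial (Fin n) k)
    (he : IsExpOf k (fun p => s • D' p) ⇑ε) :
    (aeval (fun m : Fin n =>
        (X 0 : MvPolynomial (Fin 2) k) ^ (n - 1 - (m : ℕ)) * X 1 ^ (m : ℕ))).comp ε
      = (aeval ![(X 0 : MvPolynomial (Fin 2) k), X 1 + C s * X 0]).comp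
          (aeval (fun m : Fin n =>
            (X 0 : MvPolynomial (Fin 2) k) ^ (n - 1 - (m : ℕ)) * X 1 ^ (m : ℕ))) := by
  apply MvPolynomial.algHom_ext
  intro j
  simp only [AlgHom.comp_apply]
  rw [phiD' D' hD' s ⇑ε he j, aeval_X]
  simp only [map_mul, map_pow, aeval_X, Matrix.cons_val_zero, Matrix.cons_val_one,
    Matrix.head_cons]

lemma inj_on_span (w₁ w₂ : MvPolynomial (Fin n) k)
    (h₁ : w₁ ∈ Submodule.span k (Set.range (X : Fin n → MvPolynomial (Fin n) k)))
    (h₂ : w₂ ∈ Submodule.span k (Set.range (X : Fin n → MvPolynomial (Fin n) k)))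
    (h : aeval (fun m : Fin n => (X 0 : MvPolynomial (Fin 2) k) ^ (n - 1 - (m : ℕ)) * X 1 ^ (m : ℕ)) w₁
       = aeval (fun m : Fin n => (X 0 : MvPolynomial (Fin 2) k) ^ (n - 1 - (m : ℕ)) * X 1 ^ (m : ℕ)) w₂) :
    w₁ = w₂ := by
  set g : Fin n → MvPolynomial (Fin 2) k :=
    fun m => (X 0 : MvPolynomial (Fin 2) k) ^ (n - 1 - (m : ℕ)) * X 1 ^ (m : ℕ) with hg
  set d : Fin n → (Fin 2 →₀ ℕ) :=
    fun m => Finsupp.single 0 (n - 1 - (m : ℕ)) + Finsupp.single 1 (m : ℕ) with hd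
  have hgd : ∀ m, g m = monomial (d m) 1 := by
    intro m
    rw [hg, hd]
    simp only [X_pow_eq_monomial, monomial_mul, one_mul]
  have hdinj : Function.Injective d := by
    intro m m' hmm
    have := DFunLike.congr_fun hmm (1 : Fin 2)
    simp only [hd, Finsupp.coe_add, Pi.add_apply, Finsupp.single_apply] at this
    norm_num at this
    exact Fin.ext this
  have li : LinearIndependent k g := by
    have : g = (fun s => monomial s (1 : k)) ∘ d := funext hgd
    rw [this, ← coe_basisMonomials]
    exact (basisMonomials (Fin 2) k).linearIndependent.comp d hdinj
  obtain ⟨c₁, hc₁⟩ := (Submodule.mem_span_range_iff_exists_fun k).1 h₁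
  obtain ⟨c₂, hc₂⟩ := (Submodule.mem_span_range_iff_exists_fun k).1 h₂
  have hφ : ∀ (c : Fin n → k),
      aeval (R := k) (fun m : Fin n => (X 0 : MvPolynomial (Fin 2) k) ^ (n - 1 - (m : ℕ)) * X 1 ^ (m : ℕ))
        ((∑ m, c m • X m : MvPolynomial (Fin n) k)) = ∑ m, c m • g m := by
    intro c
    rw [map_sum]
    refine Finset.sum_congr rfl (fun m _ => ?_)
    rw [map_smul, aeval_X]
  rw [← hc₁, ← hc₂, hφ, hφ] at h
  have hz : ∑ m, (c₁ m - c₂ m) • g m = 0 := by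
    simp only [sub_smul, Finset.sum_sub_distrib, h, sub_self]
  have hcz := Fintype.linearIndependent_iff.1 li _ hz
  have hc : c₁ = c₂ := funext fun m => sub_eq_zero.1 (hcz m)
  rw [← hc₁, ← hc₂, hc]

end ExpAuxNagata

theorem exp_composition_eq_mu (k : Type*) [Field k] [CharZero k] (n : ℕ) (hn : 3 ≤ n)
    (D D' : Derivation k (MvPolynomial (Fin n) k) (MvPolynomial (Fin n) k))
    (hD : ∀ j : Fin n, D (X j) =
      if h : (j : ℕ) + 1 < n then (n - ((j : ℕ) + 1)) • X (⟨(j : ℕ) + 1, h⟩ : Fin n) else 0)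
    (hD' : ∀ j : Fin n, D' (X j) =
      if h : 0 < (j : ℕ) then (j : ℕ) • X (⟨(j : ℕ) - 1, by omega⟩ : Fin n) else 0)
    (a : k) (ha : a ≠ 0)
    (ε₁ ε₂ ε₃ ε₄ μ : MvPolynomial (Fin n) k →ₐ[k] MvPolynomial (Fin n) k)
    (hε₁ : IsExpOf k (fun p => (1 - a) • D p) ⇑ε₁)
    (hε₂ : IsExpOf k (fun p => -(D' p)) ⇑ε₂)
    (hε₃ : IsExpOf k (fun p => (1 - a⁻¹) • D p) ⇑ε₃)
    (hε₄ : IsExpOf k (fun p => a • D' p) ⇑ε₄)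
    (hμ : ∀ i : Fin n, μ (X i) = (a⁻¹ ^ ((n : ℤ) - 2 * ((i : ℕ) : ℤ) - 1)) • X i) :
    ∀ p, ε₁ (ε₂ (ε₃ (ε₄ p))) = μ p := by
  classical
  open ExpAuxNagata in
  have hε₂' : IsExpOf k (fun p => (-1 : k) • D' p) ⇑ε₂ := by
    have hfun : (fun p : MvPolynomial (Fin n) k => (-1 : k) • D' p) = fun p => -(D' p) := by
      funext q; simp
    rw [hfun]; exact hε₂
  set Φ : MvPolynomial (Fin n) k →ₐ[k] MvPolynomial (Fin 2) k :=
    aeval (fun m : Fin n => (X 0 : MvPolynomial (Fin 2) k) ^ (n - 1 - (m : ℕ)) * X 1 ^ (m : ℕ))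
    with hΦ
  set S : Submodule k (MvPolynomial (Fin n) k) :=
    Submodule.span k (Set.range (X : Fin n → MvPolynomial (Fin n) k)) with hS
  -- membership lemmas
  have hXmemD : ∀ (t : k) (ε : MvPolynomial (Fin n) k →ₐ[k] MvPolynomial (Fin n) k),
      IsExpOf k (fun p => t • D p) ⇑ε → ∀ m : Fin n, ε (X m) ∈ S := by
    intro t ε he m
    rw [expD D hD t ⇑ε he m]
    refine Submodule.sum_mem _ (fun i _ => ?_)
    split_ifs with h
    · exact Submodule.smul_mem _ _ (Submodule.subset_span ⟨_, rfl⟩)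
    · exact Submodule.zero_mem _
  have hXmemD' : ∀ (s : k) (ε : MvPolynomial (Fin n) k →ₐ[k] MvPolynomial (Fin n) k),
      IsExpOf k (fun p => s • D' p) ⇑ε → ∀ m : Fin n, ε (X m) ∈ S := by
    intro s ε he m
    rw [expD' D' hD' s ⇑ε he m]
    refine Submodule.sum_mem _ (fun i _ => ?_)
    exact Submodule.smul_mem _ _ (Submodule.subset_span ⟨_, rfl⟩)
  have hmap : ∀ (ε : MvPolynomial (Fin n) k →ₐ[k] MvPolynomial (Fin n) k),
      (∀ m : Fin n, ε (X m) ∈ S) → ∀ w ∈ S, ε w ∈ S := by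
    intro ε hX w hw
    have hle : Submodule.map ε.toLinearMap S ≤ S := by
      rw [hS, Submodule.map_span, Submodule.span_le]
      rintro q ⟨x, ⟨m, rfl⟩, rfl⟩
      exact hX m
    exact hle ⟨w, hw, rfl⟩
  have key : ∀ j : Fin n, ε₁ (ε₂ (ε₃ (ε₄ (X j)))) = μ (X j) := by
    intro j
    have hjn : (j : ℕ) < n := j.2
    -- memberships
    have m4 : ε₄ (X j) ∈ S := hXmemD' a ε₄ hε₄ j
    have m3 : ε₃ (ε₄ (X j)) ∈ S := hmap ε₃ (hXmemD (1 - a⁻¹) ε₃ hε₃) _ m4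
    have m2 : ε₂ (ε₃ (ε₄ (X j))) ∈ S := hmap ε₂ (hXmemD' (-1) ε₂ hε₂') _ m3
    have m1 : ε₁ (ε₂ (ε₃ (ε₄ (X j)))) ∈ S := hmap ε₁ (hXmemD (1 - a) ε₁ hε₁) _ m2
    have mμ : μ (X j) ∈ S := by
      rw [hμ j]
      exact Submodule.smul_mem _ _ (Submodule.subset_span ⟨_, rfl⟩)
    refine inj_on_span _ _ m1 mμ ?_
    -- intertwining
    have e4 := DFunLike.congr_fun (interD' D' hD' a ε₄ hε₄) (X j)
    have e3 := DFunLike.congr_fun (interD D hD (1 - a⁻¹) ε₃ hε₃) (ε₄ (X j))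
    have e2 := DFunLike.congr_fun (interD' D' hD' (-1) ε₂ hε₂') (ε₃ (ε₄ (X j)))
    have e1 := DFunLike.congr_fun (interD D hD (1 - a) ε₁ hε₁) (ε₂ (ε₃ (ε₄ (X j))))
    simp only [AlgHom.comp_apply] at e1 e2 e3 e4
    rw [← hΦ] at e1 e2 e3 e4 ⊢
    rw [e1, e2, e3, e4]
    -- now compute
    set ψ₁ := aeval (R := k) ![(X 0 : MvPolynomial (Fin 2) k) + C (1 - a) * X 1, X 1]
    set ψ₂ := aeval (R := k) ![(X 0 : MvPolynomial (Fin 2) k), X 1 + C (-1) * X 0]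
    set ψ₃ := aeval (R := k) ![(X 0 : MvPolynomial (Fin 2) k) + C (1 - a⁻¹) * X 1, X 1]
    set ψ₄ := aeval (R := k) ![(X 0 : MvPolynomial (Fin 2) k), X 1 + C a * X 0]
    have h2 : (C a⁻¹ : MvPolynomial (Fin 2) k) * C a = 1 := by
      rw [← C_mul, inv_mul_cancel₀ ha, map_one]
    have w0 : ψ₁ (ψ₂ (ψ₃ (ψ₄ (X 0 : MvPolynomial (Fin 2) k)))) = C a⁻¹ * X 0 := by
      simp only [ψ₁, ψ₂, ψ₃, ψ₄, aeval_X, map_add, map_mul, aeval_C, Matrix.cons_val_zero,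
        Matrix.cons_val_one, Matrix.head_cons, MvPolynomial.algebraMap_eq, map_sub, map_one,
        map_neg]
      linear_combination (-(X 1 : MvPolynomial (Fin 2) k)) * h2
    have w1 : ψ₁ (ψ₂ (ψ₃ (ψ₄ (X 1 : MvPolynomial (Fin 2) k)))) = C a * X 1 := by
      simp only [ψ₁, ψ₂, ψ₃, ψ₄, aeval_X, map_add, map_mul, aeval_C, Matrix.cons_val_zero,
        Matrix.cons_val_one, Matrix.head_cons, MvPolynomial.algebraMap_eq, map_sub, map_one,
        map_neg]
      linear_combination ((X 0 : MvPolynomial (Fin 2) k) - C a * X 1) * h2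
    have hΦX : Φ (X j) = (X 0 : MvPolynomial (Fin 2) k) ^ (n - 1 - (j : ℕ)) * X 1 ^ (j : ℕ) := by
      rw [hΦ, aeval_X]
    rw [hΦX]
    rw [map_mul, map_pow, map_pow, map_mul, map_pow, map_pow, map_mul, map_pow, map_pow,
      map_mul, map_pow, map_pow, w0, w1]
    -- μ side
    rw [hμ j, map_smul, hΦX]
    rw [mul_pow, mul_pow, ← C_pow, ← C_pow, smul_eq_C_mul]
    have hb : (a⁻¹ : k) ≠ 0 := inv_ne_zero ha
    have hsc : a⁻¹ ^ (n - 1 - (j : ℕ)) * a ^ (j : ℕ)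
        = a⁻¹ ^ ((n : ℤ) - 2 * ((j : ℕ) : ℤ) - 1) := by
      have hpow : a ^ (j : ℕ) = a⁻¹ ^ (-((j : ℕ) : ℤ)) := by
        rw [zpow_neg, zpow_natCast, inv_pow, inv_inv]
      rw [hpow, ← zpow_natCast a⁻¹ (n - 1 - (j : ℕ)), ← zpow_add₀ hb]
      congr 1
      omega
    rw [← hsc, C_mul]
    ring
  -- extend to all p
  have hcomp : ε₁.comp (ε₂.comp (ε₃.comp ε₄)) = μ :=
    MvPolynomial.algHom_ext fun j => by simpa using key j
  intro p
  have := DFunLike.congr_fun hcomp p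
  simpa using this
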